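/- Let m ≥ 1, ε > 0 and δ > 0. Then for every wavenumber k ∈ ℝ, every eigenvalue σ ∈ ℂ of the linear-stability matrix A_δ(k) satisfies Re σ ≤ 0. That is, if the scent decays too rapidly (m ≥ 1), the uniform steady state is linearly stable at all wavenumbers and no territorial patterns form. -/

import Mathlib

/-- The nonlocal linear-stability matrix `A_δ(k)` for parameters `m, ε, δ` and
wavenumber `k`: `A_δ(k) = [[a,0,0,c],[0,a,c,0],[d,0,−b,0],[0,d,0,−b]]` with
`a = (1/(1+m)² − 1)k²`, `b = (1+m)/ε`, `c = −2(2 − 1/(1+m))·(k/δ)·sin(δk)`,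
`d = m/(ε(1+m))`. -/
noncomputable def Adelta (m ε δ k : ℝ) : Matrix (Fin 4) (Fin 4) ℝ :=
  !![(1 / (1 + m) ^ 2 - 1) * k ^ 2, 0, 0,
       -2 * (2 - 1 / (1 + m)) * (k / δ) * Real.sin (δ * k);
     0, (1 / (1 + m) ^ 2 - 1) * k ^ 2,
       -2 * (2 - 1 / (1 + m)) * (k / δ) * Real.sin (δ * k), 0;
     m / (ε * (1 + m)), 0, -((1 + m) / ε), 0;
     0, m / (ε * (1 + m)), 0, -((1 + m) / ε)]

/-- `σ ∈ ℂ` is an eigenvalue of the real matrix `M`. -/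
def IsEigC (M : Matrix (Fin 4) (Fin 4) ℝ) (σ : ℂ) : Prop :=
  (M.map (fun x : ℝ => (x : ℂ)) - σ • 1).det = 0

/-- Roots of a monic quadratic with nonnegative real coefficients have
nonpositive real part. -/
lemma quad_re_nonpos (B C : ℝ) (hB : 0 ≤ B) (hC : 0 ≤ C) (σ : ℂ)
    (h : σ ^ 2 + (B : ℂ) * σ + (C : ℂ) = 0) : σ.re ≤ 0 := by
  by_contra hx
  push_neg at hx
  have hre := congrArg Complex.re h
  have him := congrArg Complex.im h
  simp [Complex.add_re, Complex.add_im, Complex.mul_re, Complex.mul_im, pow_two] at hre him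
  set x := σ.re
  set y := σ.im
  have hy2 : y ^ 2 * (2 * x + B) = 0 := by nlinarith [him]
  have hy : y = 0 := by nlinarith [sq_nonneg y]
  nlinarith [hre, sq_nonneg x]

/-- Determinant factorization for the structured 4×4 matrix. -/
lemma det4 (a b c d σ : ℂ) :
    (!![a,0,0,c;0,a,c,0;d,0,-b,0;0,d,0,-b] - σ • 1).det
      = ((a - σ) * (-b - σ) - c * d) * ((a - σ) * (-b - σ) + c * d) := by
  have h : (!![a,0,0,c;0,a,c,0;d,0,-b,0;0,d,0,-b] - σ • 1)
      = !![a-σ,0,0,c;0,a-σ,c,0;d,0,-b-σ,0;0,d,0,-b-σ] := by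
    ext i j
    fin_cases i <;> fin_cases j <;> simp [Matrix.one_apply] <;> ring
  rw [h, Matrix.det_succ_row_zero]
  simp [Fin.sum_univ_succ, Matrix.det_fin_three, show (Fin.castSucc 2 : Fin 4) = 2 from rfl,
    show (Fin.succAbove (3 : Fin 4) (2 : Fin 3)) = 2 from rfl]
  ring

/-- For `m ≥ 1`, `ε > 0`, `δ > 0` and every wavenumber `k`, every
eigenvalue `σ ∈ ℂ` of `A_δ(k)` has `Re σ ≤ 0`: if the scent decays too rapidly the
uniform steady state is linearly stable at all wavenumbers. -/
theorem nonlocal_stable_for_fast_decay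
    (m ε δ : ℝ) (hm : 1 ≤ m) (hε : 0 < ε) (hδ : 0 < δ) :
    ∀ k : ℝ, ∀ σ : ℂ, IsEigC (Adelta m ε δ k) σ → σ.re ≤ 0 := by
  intro k σ h
  set a : ℝ := (1 / (1 + m) ^ 2 - 1) * k ^ 2 with ha
  set b : ℝ := (1 + m) / ε with hb
  set c : ℝ := -2 * (2 - 1 / (1 + m)) * (k / δ) * Real.sin (δ * k) with hc
  set d : ℝ := m / (ε * (1 + m)) with hd
  have hs : (2:ℝ) ≤ 1 + m := by linarith
  have hs0 : (0:ℝ) < 1 + m := by linarith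
  set t : ℝ := k / δ * Real.sin (δ * k) with ht
  have htabs : |t| ≤ k ^ 2 := by
    have h1 : |Real.sin (δ * k)| ≤ |δ * k| := Real.abs_sin_le_abs
    have h2 : |t| = |k| / δ * |Real.sin (δ * k)| := by
      rw [ht, abs_mul, abs_div, abs_of_pos hδ]
    rw [h2]
    calc |k| / δ * |Real.sin (δ * k)| ≤ |k| / δ * |δ * k| := by
            exact mul_le_mul_of_nonneg_left h1 (by positivity)
      _ = |k| / δ * (δ * |k|) := by rw [abs_mul, abs_of_pos hδ]
      _ = |k| * |k| := by field_simp
      _ = k ^ 2 := by rw [abs_mul_abs_self]; ring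
  have hanp : a ≤ 0 := by
    have h3 : 1 / (1 + m) ^ 2 ≤ 1 := by
      rw [div_le_one (by positivity)]; nlinarith
    nlinarith [sq_nonneg k]
  have hbpos : 0 < b := by positivity
  have hB : 0 ≤ b - a := by linarith
  have hfac : (0:ℝ) ≤ 2 * (2*(1+m) - 1) * m := by nlinarith
  have hnum : ∀ s : ℝ, |s| ≤ 1 →
      0 ≤ ((1+m)^2 - 1) * (1+m) * k^2 + s * (2 * (2*(1+m) - 1) * t * m) := by
    intro s hsle
    have habs : |s * (2 * (2*(1+m) - 1) * t * m)| ≤ 2 * (2*(1+m) - 1) * k^2 * m := by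
      rw [abs_mul]
      have h4 : |2 * (2*(1+m) - 1) * t * m| = 2 * (2*(1+m) - 1) * m * |t| := by
        rw [abs_mul, abs_mul, abs_of_nonneg (by nlinarith : (0:ℝ) ≤ 2 * (2*(1+m)-1)),
          abs_of_nonneg (by linarith : (0:ℝ) ≤ m)]
        ring
      rw [h4]
      have h5 : 2 * (2*(1+m) - 1) * m * |t| ≤ 2 * (2*(1+m) - 1) * m * k^2 :=
        mul_le_mul_of_nonneg_left htabs hfac
      calc |s| * (2 * (2*(1+m) - 1) * m * |t|) ≤ 1 * (2 * (2*(1+m) - 1) * m * k^2) :=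
            mul_le_mul hsle h5 (by positivity) zero_le_one
        _ = 2 * (2*(1+m) - 1) * k^2 * m := by ring
    have h1 : -(2 * (2*(1+m) - 1) * k^2 * m) ≤ s * (2 * (2*(1+m) - 1) * t * m) := by
      have := neg_abs_le (s * (2 * (2*(1+m) - 1) * t * m))
      linarith
    nlinarith [mul_nonneg (mul_nonneg (sq_nonneg m) (by linarith : (0:ℝ) ≤ m - 1)) (sq_nonneg k)]
  have hCgen : ∀ s : ℝ, |s| ≤ 1 → 0 ≤ -(a*b) + s * (c*d) := by
    intro s hsle
    have hkey : -(a*b) + s * (c*d)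
        = (((1+m)^2 - 1) * (1+m) * k^2 + (-s) * (2 * (2*(1+m) - 1) * t * m)) / (ε * (1+m)^2) := by
      rw [ha, hb, hc, hd, ht]; field_simp; ring
    rw [hkey]
    exact div_nonneg (hnum (-s) (by rwa [abs_neg])) (by positivity)
  have hmap : (Adelta m ε δ k).map (fun x : ℝ => (x : ℂ))
      = !![(a:ℂ),0,0,(c:ℂ);0,(a:ℂ),(c:ℂ),0;(d:ℂ),0,-(b:ℂ),0;0,(d:ℂ),0,-(b:ℂ)] := by
    ext i j
    fin_cases i <;> fin_cases j <;> simp [Adelta, ha, hb, hc, hd]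
  rw [IsEigC, hmap, det4] at h
  rcases mul_eq_zero.mp h with hf | hf
  · have heq : σ ^ 2 + ((b - a : ℝ) : ℂ) * σ + (((-(a*b) + (-1) * (c*d)) : ℝ) : ℂ) = 0 := by
      push_cast
      linear_combination hf
    exact quad_re_nonpos _ _ hB (hCgen (-1) (by norm_num)) σ heq
  · have heq : σ ^ 2 + ((b - a : ℝ) : ℂ) * σ + (((-(a*b) + 1 * (c*d)) : ℝ) : ℂ) = 0 := by
      push_cast
      linear_combination hf
    exact quad_re_nonpos _ _ hB (hCgen 1 (by norm_num)) σ heq
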